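/- Let m ∈ ℕ, T₀ ∈ ℝ, let F : [T₀,∞) → (m × m real matrices) and M : [T₀,∞) → ℝ be continuous, and suppose every entry of F(t) + M(t)·1 is nonnegative for every t ≥ T₀ (where 1 is the identity matrix). Let Q : [T₀,∞) → (m × m real matrices) be differentiable with Q'(t) = F(t)·Q(t) for all t ≥ T₀ and Q(T₀) = 1, and let P : [T₀,∞) → (m × m real matrices) be differentiable with P'(t) = (F(t) + M(t)·1)·P(t) for all t ≥ T₀ and P(T₀) = 1. Then P(t) = Q(t)·exp(∫_{T₀}^t M(s) ds) for every t ≥ T₀, and consequently every entry of Q(t) is nonnegative for every t ≥ T₀. -/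

import Mathlib

open Filter Topology

/-- entrywise negative part of a square array -/
noncomputable def npart15 {n : ℕ} (x : Fin n → Fin n → ℝ) : Fin n → Fin n → ℝ :=
  fun i j => max (-(x i j)) 0

lemma npart15_entry_le {n : ℕ} (x : Fin n → Fin n → ℝ) (i j : Fin n) :
    npart15 x i j ≤ ‖npart15 x‖ := by
  calc npart15 x i j ≤ |npart15 x i j| := le_abs_self _
    _ = ‖npart15 x i j‖ := (Real.norm_eq_abs _).symm
    _ ≤ ‖npart15 x i‖ := norm_le_pi_norm (npart15 x i) j
    _ ≤ ‖npart15 x‖ := norm_le_pi_norm (npart15 x) i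

lemma entry_le_pinorm {n : ℕ} (x : Fin n → Fin n → ℝ) (i j : Fin n) :
    |x i j| ≤ ‖x‖ := by
  calc |x i j| = ‖x i j‖ := (Real.norm_eq_abs _).symm
    _ ≤ ‖x i‖ := norm_le_pi_norm (x i) j
    _ ≤ ‖x‖ := norm_le_pi_norm x i

lemma norm_npart15_le {n : ℕ} (x y : Fin n → Fin n → ℝ) :
    ‖npart15 x‖ ≤ ‖npart15 y‖ + ‖x - y‖ := by
  rw [pi_norm_le_iff_of_nonneg (add_nonneg (norm_nonneg _) (norm_nonneg _))]
  intro i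
  rw [pi_norm_le_iff_of_nonneg (add_nonneg (norm_nonneg _) (norm_nonneg _))]
  intro j
  have h1 : max (-(y i j)) 0 ≤ ‖npart15 y‖ := npart15_entry_le y i j
  have h2 : |x i j - y i j| ≤ ‖x - y‖ := by
    have := entry_le_pinorm (x - y) i j
    simpa using this
  have h3 : -(x i j - y i j) ≤ |x i j - y i j| := neg_le_abs _
  rw [Real.norm_eq_abs, abs_of_nonneg (le_max_right _ _)]
  apply max_le
  · have h4 := le_max_left (-(y i j)) 0
    show -(x i j) ≤ _
    linarith
  · positivity

/-- key cone estimate: shifting along a nonnegative-matrix vector field grows the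
negative part at most linearly. -/
lemma npart15_shift {n : ℕ} (A : Matrix (Fin n) (Fin n) ℝ) (hA : ∀ i j, 0 ≤ A i j)
    (C : ℝ) (hC : 0 ≤ C) (hAC : ∀ i j, A i j ≤ C) (x : Fin n → Fin n → ℝ) (h : ℝ)
    (hh : 0 ≤ h) :
    ‖npart15 (x + h • fun i j => ∑ k, A i k * x k j)‖
      ≤ (1 + h * ((n : ℝ) * C)) * ‖npart15 x‖ := by
  have hd : (0 : ℝ) ≤ ‖npart15 x‖ := norm_nonneg _
  have hrhs : 0 ≤ (1 + h * ((n : ℝ) * C)) * ‖npart15 x‖ := by positivity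
  rw [pi_norm_le_iff_of_nonneg hrhs]
  intro i
  rw [pi_norm_le_iff_of_nonneg hrhs]
  intro j
  set nn : Fin n → Fin n → ℝ := npart15 x with hnn
  set u : Fin n → Fin n → ℝ := fun i j => x i j + nn i j with hu
  have hu0 : ∀ i j, 0 ≤ u i j := by
    intro i j
    have := le_max_left (-(x i j)) 0
    simp only [hu, hnn, npart15]
    have h0 := le_max_right (-(x i j)) 0
    rcases le_total (x i j) 0 with hx | hx
    · have : max (-(x i j)) 0 = -(x i j) := max_eq_left (by linarith)
      simp [this]
    · have : max (-(x i j)) 0 = 0 := max_eq_right (by linarith)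
      simp [this, hx]
  have hxval : ∀ k j, x k j = u k j - nn k j := by intro k j; simp [hu]
  -- the entry of the shifted vector
  have hentry : (x + h • fun i j => ∑ k, A i k * x k j) i j
      = (u i j + h * ∑ k, A i k * u k j) - (nn i j + h * ∑ k, A i k * nn k j) := by
    simp only [Pi.add_apply, Pi.smul_apply, smul_eq_mul]
    rw [hxval i j]
    have : ∀ k, A i k * x k j = A i k * u k j - A i k * nn k j := by
      intro k; rw [hxval k j]; ring
    rw [Finset.sum_congr rfl (fun k _ => this k), Finset.sum_sub_distrib]
    ring
  have hpos1 : 0 ≤ u i j + h * ∑ k, A i k * u k j := by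
    have : 0 ≤ ∑ k, A i k * u k j :=
      Finset.sum_nonneg fun k _ => mul_nonneg (hA i k) (hu0 k j)
    have := hu0 i j
    positivity
  have hnb : ∀ k j, nn k j ≤ ‖npart15 x‖ := fun k j => npart15_entry_le x k j
  have hnn0 : ∀ k j, 0 ≤ nn k j := fun k j => le_max_right _ _
  have hsum : ∑ k, A i k * nn k j ≤ (n : ℝ) * (C * ‖npart15 x‖) := by
    calc ∑ k, A i k * nn k j ≤ ∑ _k : Fin n, C * ‖npart15 x‖ :=
          Finset.sum_le_sum fun k _ =>
            mul_le_mul (hAC i k) (hnb k j) (hnn0 k j) hC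
      _ = (n : ℝ) * (C * ‖npart15 x‖) := by
          rw [Finset.sum_const, Finset.card_univ, Fintype.card_fin, nsmul_eq_mul]
  have hb : -((x + h • fun i j => ∑ k, A i k * x k j) i j)
      ≤ (1 + h * ((n : ℝ) * C)) * ‖npart15 x‖ := by
    rw [hentry]
    have h1 : nn i j ≤ ‖npart15 x‖ := hnb i j
    have h2 : h * ∑ k, A i k * nn k j ≤ h * ((n : ℝ) * (C * ‖npart15 x‖)) :=
      mul_le_mul_of_nonneg_left hsum hh
    nlinarith [hpos1]
  rw [Real.norm_eq_abs, abs_of_nonneg (le_max_right _ _)]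
  exact max_le hb hrhs

/-- Key step of the proof of Proposition 8 ('mon') of the paper: if
`F(t) + M(t)·1` is entrywise nonnegative (Metzler-type condition), `Q' = F·Q`
with `Q(T₀) = 1`, and `P' = (F + M·1)·P` with `P(T₀) = 1`, then
`P(t) = exp(∫_{T₀}^t M)·Q(t)` for all `t ≥ T₀`, and consequently `Q(t)` is
entrywise nonnegative for all `t ≥ T₀`. -/
theorem stmt_15 (m : ℕ) (T₀ : ℝ)
    (F : ℝ → Matrix (Fin m) (Fin m) ℝ) (M : ℝ → ℝ)
    (hFc : ∀ i j, ContinuousOn (fun t => F t i j) (Set.Ici T₀))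
    (hMc : ContinuousOn M (Set.Ici T₀))
    (hpos : ∀ t ≥ T₀, ∀ i j,
      0 ≤ (F t + M t • (1 : Matrix (Fin m) (Fin m) ℝ)) i j)
    (Q P : ℝ → Matrix (Fin m) (Fin m) ℝ)
    (hQ : ∀ t ≥ T₀, ∀ i j,
      HasDerivWithinAt (fun s => Q s i j) ((F t * Q t) i j) (Set.Ici T₀) t)
    (hQ0 : Q T₀ = 1)
    (hP : ∀ t ≥ T₀, ∀ i j,
      HasDerivWithinAt (fun s => P s i j)
        (((F t + M t • (1 : Matrix (Fin m) (Fin m) ℝ)) * P t) i j)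
        (Set.Ici T₀) t)
    (hP0 : P T₀ = 1) :
    ∀ t ≥ T₀,
      P t = Real.exp (∫ s in T₀..t, M s) • Q t ∧ ∀ i j, 0 ≤ Q t i j := by
  intro t ht
  -- the scalar integral
  set g : ℝ → ℝ := fun u => ∫ s in T₀..u, M s with hgdef
  -- bounds on F and M on the compact interval
  obtain ⟨C₁, hC₁⟩ : ∃ C, ∀ s ∈ Set.Icc T₀ t,
      ‖(fun i j => F s i j : Fin m → Fin m → ℝ)‖ + |M s| ≤ C := by
    have hcont : ContinuousOn
        (fun s => ‖(fun i j => F s i j : Fin m → Fin m → ℝ)‖ + |M s|) (Set.Icc T₀ t) := by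
      apply ContinuousOn.add
      · exact (continuousOn_pi.2 fun i => continuousOn_pi.2 fun j =>
          (hFc i j).mono Set.Icc_subset_Ici_self).norm
      · exact (hMc.mono Set.Icc_subset_Ici_self).abs
    obtain ⟨C, hC⟩ := isCompact_Icc.exists_bound_of_continuousOn hcont
    exact ⟨C, fun s hs => (le_abs_self _).trans (by simpa [Real.norm_eq_abs] using hC s hs)⟩
  set C₀ : ℝ := max C₁ 0 with hC₀def
  have hC₀ : 0 ≤ C₀ := le_max_right _ _
  have hFb : ∀ s ∈ Set.Icc T₀ t, ∀ i j, |F s i j| ≤ C₀ := by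
    intro s hs i j
    have h1 := hC₁ s hs
    have h2 : |F s i j| ≤ ‖(fun i j => F s i j : Fin m → Fin m → ℝ)‖ :=
      entry_le_pinorm _ i j
    have h3 : (0:ℝ) ≤ |M s| := abs_nonneg _
    calc |F s i j| ≤ C₁ := by linarith
      _ ≤ C₀ := le_max_left _ _
  have hMb : ∀ s ∈ Set.Icc T₀ t, |M s| ≤ C₀ := by
    intro s hs
    have h1 := hC₁ s hs
    have h3 : (0:ℝ) ≤ ‖(fun i j => F s i j : Fin m → Fin m → ℝ)‖ := norm_nonneg _
    calc |M s| ≤ C₁ := by linarith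
      _ ≤ C₀ := le_max_left _ _
  have hAb : ∀ s ∈ Set.Icc T₀ t, ∀ i j,
      (F s + M s • (1 : Matrix (Fin m) (Fin m) ℝ)) i j ≤ 2 * C₀ := by
    intro s hs i j
    have h1 : (F s + M s • (1 : Matrix (Fin m) (Fin m) ℝ)) i j
        = F s i j + M s * (1 : Matrix (Fin m) (Fin m) ℝ) i j := by
      simp [Matrix.add_apply, Matrix.smul_apply, smul_eq_mul]
    have h2 : |(1 : Matrix (Fin m) (Fin m) ℝ) i j| ≤ 1 := by
      rw [Matrix.one_apply]
      split <;> simp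
    have h3 := hFb s hs i j
    have h4 := hMb s hs
    have h5 : |M s * (1 : Matrix (Fin m) (Fin m) ℝ) i j| ≤ C₀ := by
      rw [abs_mul]
      calc |M s| * |(1 : Matrix (Fin m) (Fin m) ℝ) i j| ≤ C₀ * 1 :=
            mul_le_mul h4 h2 (abs_nonneg _) hC₀
        _ = C₀ := mul_one _
    rw [h1]
    have := le_abs_self (F s i j)
    have := le_abs_self (M s * (1 : Matrix (Fin m) (Fin m) ℝ) i j)
    linarith
  set K : ℝ := (m : ℝ) * (2 * C₀) with hKdef
  have hK : 0 ≤ K := by positivity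
  -- derivative of g
  have hgderiv : ∀ x ∈ Set.Icc T₀ t, HasDerivWithinAt g (M x) (Set.Ici x) x := by
    intro x hx
    have hint : IntervalIntegrable M MeasureTheory.volume T₀ x := by
      apply ContinuousOn.intervalIntegrable
      apply hMc.mono
      rw [Set.uIcc_of_le hx.1]
      exact fun y hy => hy.1
    have hmeas : StronglyMeasurableAtFilter M (𝓝[Set.Ioi x] x)
        MeasureTheory.volume :=
      (hMc.mono (fun y (hy : y ∈ Set.Ioi x) => le_of_lt (lt_of_le_of_lt hx.1 hy))).stronglyMeasurableAtFilter_nhdsWithin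
        measurableSet_Ioi x
    have hcw : ContinuousWithinAt M (Set.Ioi x) x :=
      ((hMc x hx.1).mono (fun y (hy : y ∈ Set.Ioi x) => le_of_lt (lt_of_le_of_lt hx.1 hy)))
    exact intervalIntegral.integral_hasDerivWithinAt_right hint hmeas hcw
  have hgcont : ContinuousOn g (Set.Icc T₀ t) := by
    have hint : MeasureTheory.IntegrableOn M (Set.uIcc T₀ t) MeasureTheory.volume := by
      rw [Set.uIcc_of_le ht]
      exact (hMc.mono Set.Icc_subset_Ici_self).integrableOn_compact isCompact_Icc
    have := intervalIntegral.continuousOn_primitive_interval hint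
    rwa [Set.uIcc_of_le ht] at this
  -- pi-valued versions
  set p : ℝ → (Fin m → Fin m → ℝ) := fun u i j => P u i j with hpdef
  set q : ℝ → (Fin m → Fin m → ℝ) := fun u i j => Q u i j with hqdef
  have hpd : ∀ x, T₀ ≤ x → HasDerivWithinAt p
      (fun i j => ((F x + M x • (1 : Matrix (Fin m) (Fin m) ℝ)) * P x) i j)
      (Set.Ici T₀) x := fun x hx =>
    hasDerivWithinAt_pi.2 fun i => hasDerivWithinAt_pi.2 fun j => hP x hx i j
  have hqd : ∀ x, T₀ ≤ x → HasDerivWithinAt q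
      (fun i j => (F x * Q x) i j) (Set.Ici T₀) x := fun x hx =>
    hasDerivWithinAt_pi.2 fun i => hasDerivWithinAt_pi.2 fun j => hQ x hx i j
  have hPcont : ∀ i j, ContinuousOn (fun u => P u i j) (Set.Icc T₀ t) :=
    fun i j => (fun x hx => ((hP x hx.1 i j).continuousWithinAt).mono
      Set.Icc_subset_Ici_self)
  have hQcont : ∀ i j, ContinuousOn (fun u => Q u i j) (Set.Icc T₀ t) :=
    fun i j => (fun x hx => ((hQ x hx.1 i j).continuousWithinAt).mono
      Set.Icc_subset_Ici_self)
  -- Part 1 : uniqueness via Gronwall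
  set R : ℝ → (Fin m → Fin m → ℝ) := fun u i j => Real.exp (-(g u)) * P u i j with hRdef
  set D : ℝ → (Fin m → Fin m → ℝ) := fun u => R u - q u with hDdef
  have hDd : ∀ x ∈ Set.Ico T₀ t, HasDerivWithinAt D
      (fun i j => ∑ k, F x i k * D x k j) (Set.Ici x) x := by
    intro x hx
    have hxI : x ∈ Set.Icc T₀ t := ⟨hx.1, hx.2.le⟩
    have hRd : HasDerivWithinAt R (fun i j => ∑ k, F x i k * R x k j) (Set.Ici x) x := by
      rw [hasDerivWithinAt_pi]; intro i; rw [hasDerivWithinAt_pi]; intro j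
      have he : HasDerivWithinAt (fun u => Real.exp (-(g u)))
          (Real.exp (-(g x)) * -(M x)) (Set.Ici x) x := ((hgderiv x hxI).neg).exp
      have hpij := (hP x hx.1 i j).mono (Set.Ici_subset_Ici.2 hx.1)
      have hmul := he.mul hpij
      have hexp : ((F x + M x • (1 : Matrix (Fin m) (Fin m) ℝ)) * P x) i j
          = (F x * P x) i j + M x * P x i j := by
        simp [Matrix.add_mul, Matrix.smul_mul, Matrix.add_apply, Matrix.smul_apply,
          smul_eq_mul, Matrix.one_mul]
      have hsum : ∑ k, F x i k * R x k j
          = Real.exp (-(g x)) * (F x * P x) i j := by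
        rw [Matrix.mul_apply, Finset.mul_sum]
        exact Finset.sum_congr rfl fun k _ => by simp only [hRdef]; ring
      have hval : ∑ k, F x i k * R x k j
          = Real.exp (-(g x)) * -(M x) * P x i j
            + Real.exp (-(g x)) * ((F x + M x • (1 : Matrix (Fin m) (Fin m) ℝ)) * P x) i j := by
        rw [hsum, hexp]; ring
      show HasDerivWithinAt (fun u => R u i j) (∑ k, F x i k * R x k j) (Set.Ici x) x
      rw [hval]
      exact hmul
    have hqdx : HasDerivWithinAt q (fun i j => (F x * Q x) i j) (Set.Ici x) x :=
      (hqd x hx.1).mono (Set.Ici_subset_Ici.2 hx.1)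
    have hsub := hRd.sub hqdx
    have hval2 : (fun i j => ∑ k, F x i k * D x k j)
        = ((fun i j => ∑ k, F x i k * R x k j) - fun i j => (F x * Q x) i j) := by
      funext i j
      simp only [Pi.sub_apply]
      rw [Matrix.mul_apply, ← Finset.sum_sub_distrib]
      apply Finset.sum_congr rfl
      intro k _
      simp only [hDdef, Pi.sub_apply, hqdef]
      ring
    rw [hval2]
    exact hsub
  have hDbound : ∀ x ∈ Set.Ico T₀ t,
      ‖(fun i j => ∑ k, F x i k * D x k j : Fin m → Fin m → ℝ)‖ ≤ K * ‖D x‖ + 0 := by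
    intro x hx
    rw [add_zero]
    have hrhs : 0 ≤ K * ‖D x‖ := mul_nonneg hK (norm_nonneg _)
    rw [pi_norm_le_iff_of_nonneg hrhs]; intro i
    rw [pi_norm_le_iff_of_nonneg hrhs]; intro j
    rw [Real.norm_eq_abs]
    calc |∑ k, F x i k * D x k j| ≤ ∑ k, |F x i k * D x k j| :=
          Finset.abs_sum_le_sum_abs _ _
      _ ≤ ∑ _k : Fin m, C₀ * ‖D x‖ := by
          apply Finset.sum_le_sum
          intro k _
          rw [abs_mul]
          exact mul_le_mul (hFb x ⟨hx.1, hx.2.le⟩ i k) (entry_le_pinorm (D x) k j)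
            (abs_nonneg _) hC₀
      _ = (m : ℝ) * (C₀ * ‖D x‖) := by
          rw [Finset.sum_const, Finset.card_univ, Fintype.card_fin, nsmul_eq_mul]
      _ ≤ K * ‖D x‖ := by
          rw [hKdef]
          nlinarith [norm_nonneg (D x), hC₀]
  have hDcont : ContinuousOn D (Set.Icc T₀ t) := by
    apply ContinuousOn.sub
    · exact continuousOn_pi.2 fun i => continuousOn_pi.2 fun j =>
        ((Real.continuous_exp.comp_continuousOn hgcont.neg).mul (hPcont i j))
    · exact continuousOn_pi.2 fun i => continuousOn_pi.2 fun j => hQcont i j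
  have hD0 : ‖D T₀‖ ≤ 0 := by
    have hD0' : D T₀ = 0 := by
      funext i j
      simp only [hDdef, hRdef, hqdef, Pi.sub_apply, Pi.zero_apply, hgdef]
      rw [intervalIntegral.integral_same]
      simp [hP0, hQ0]
    rw [hD0', norm_zero]
  have hDt := norm_le_gronwallBound_of_norm_deriv_right_le hDcont hDd hD0 hDbound t
    ⟨ht, le_rfl⟩
  rw [gronwallBound_ε0_δ0] at hDt
  have hDt0 : D t = 0 := norm_le_zero_iff.1 hDt
  have hPQ : P t = Real.exp (∫ s in T₀..t, M s) • Q t := by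
    ext i j
    have h := congrFun (congrFun hDt0 i) j
    simp only [hDdef, hRdef, hqdef, Pi.sub_apply, Pi.zero_apply] at h
    have h' : Real.exp (-(g t)) * P t i j = Q t i j := by linarith
    have hne : Real.exp (g t) ≠ 0 := Real.exp_ne_zero _
    rw [Matrix.smul_apply, smul_eq_mul]
    rw [Real.exp_neg] at h'
    show P t i j = Real.exp (g t) * Q t i j
    field_simp at h'
    linarith
  -- Part 2 : nonnegativity via Gronwall on the negative part
  set d : ℝ → ℝ := fun u => ‖npart15 (p u)‖ with hddef
  have hdcont : ContinuousOn d (Set.Icc T₀ t) := by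
    apply ContinuousOn.norm
    exact continuousOn_pi.2 fun i => continuousOn_pi.2 fun j =>
      (continuous_id.max continuous_const).comp_continuousOn ((hPcont i j).neg)
  have hf' : ∀ x ∈ Set.Ico T₀ t, ∀ r, K * d x < r →
      ∃ᶠ z in 𝓝[>] x, (z - x)⁻¹ * (d z - d x) < r := by
    intro x hx r hr
    have hxI : x ∈ Set.Icc T₀ t := ⟨hx.1, hx.2.le⟩
    set v : Fin m → Fin m → ℝ :=
      fun i j => ∑ k, (F x + M x • (1 : Matrix (Fin m) (Fin m) ℝ)) i k * p x k j with hvdef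
    have hpdx : HasDerivWithinAt p v (Set.Ici x) x := by
      have := (hpd x hx.1).mono (Set.Ici_subset_Ici.2 hx.1)
      convert this using 1 <;> first | rfl | (funext i j; simp [hvdef, hpdef, Matrix.mul_apply])
    have hlo := hasDerivWithinAt_iff_isLittleO.1 hpdx
    set ε' : ℝ := (r - K * d x) / 2 with hε'def
    have hε' : 0 < ε' := by rw [hε'def]; linarith
    have hev : ∀ᶠ z in 𝓝[>] x, ‖p z - p x - (z - x) • v‖ ≤ ε' * ‖z - x‖ :=
      (hlo.def hε').filter_mono (nhdsWithin_mono x Set.Ioi_subset_Ici_self)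
    have key : ∀ᶠ z in 𝓝[>] x, (z - x)⁻¹ * (d z - d x) < r := by
      filter_upwards [hev, self_mem_nhdsWithin] with z hz hz'
      have hzx : 0 < z - x := sub_pos.2 hz'
      have h1 : d z ≤ ‖npart15 (p x + (z - x) • v)‖ + ‖p z - (p x + (z - x) • v)‖ :=
        norm_npart15_le (p z) (p x + (z - x) • v)
      have h1' : p z - (p x + (z - x) • v) = p z - p x - (z - x) • v := by abel
      have h2 : ‖npart15 (p x + (z - x) • v)‖ ≤ (1 + (z - x) * K) * d x := by
        rw [hddef, hKdef]
        exact npart15_shift (F x + M x • (1 : Matrix (Fin m) (Fin m) ℝ))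
          (hpos x hx.1) (2 * C₀) (by positivity) (hAb x hxI) (p x) (z - x) hzx.le
      have h3 : d z - d x ≤ (z - x) * (K * d x + ε') := by
        have h4 : ‖p z - p x - (z - x) • v‖ ≤ ε' * (z - x) := by
          rw [Real.norm_eq_abs (z - x), abs_of_pos hzx] at hz
          exact hz
        rw [h1'] at h1
        nlinarith
      have h5 : (z - x)⁻¹ * (d z - d x) ≤ K * d x + ε' := by
        calc (z - x)⁻¹ * (d z - d x) ≤ (z - x)⁻¹ * ((z - x) * (K * d x + ε')) :=
              mul_le_mul_of_nonneg_left h3 (inv_nonneg.2 hzx.le)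
          _ = K * d x + ε' := inv_mul_cancel_left₀ (ne_of_gt hzx) _
      have : K * d x + ε' < r := by rw [hε'def]; linarith
      linarith
    exact key.frequently
  have hd0 : d T₀ ≤ 0 := by
    have : npart15 (p T₀) = 0 := by
      funext i j
      simp only [npart15, hpdef, hP0, Pi.zero_apply]
      rw [Matrix.one_apply]
      split <;> simp
    rw [hddef]
    simp only [this, norm_zero]
    try exact le_rfl
  have hbound2 : ∀ x ∈ Set.Ico T₀ t, K * d x ≤ K * d x + 0 := by
    intro x _; rw [add_zero]
  have hdt := le_gronwallBound_of_liminf_deriv_right_le hdcont hf' hd0 hbound2 t ⟨ht, le_rfl⟩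
  rw [gronwallBound_ε0_δ0] at hdt
  have hPnn : ∀ i j, 0 ≤ P t i j := by
    intro i j
    have h0 : npart15 (p t) = 0 := norm_le_zero_iff.1 hdt
    have h1 := congrFun (congrFun h0 i) j
    simp only [npart15, hpdef, Pi.zero_apply] at h1
    have h2 := le_max_left (-(P t i j)) 0
    rw [h1] at h2
    linarith
  refine ⟨hPQ, fun i j => ?_⟩
  have h := hPnn i j
  rw [hPQ, Matrix.smul_apply, smul_eq_mul] at h
  nlinarith [Real.exp_pos (∫ s in T₀..t, M s), h]
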